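/- Let (Y_1,…,Y_{n+1}) be a Σ_q-family on a complex Hilbert space H and let ξ∈H satisfy Y_iξ = 0 for all 1≤i≤n. For k∈ℕⁿ define |k⟩_ξ := ((q²;q²)_{k_1}⋯(q²;q²)_{k_{n-1}}(q⁴;q⁴)_{k_n})^{-1/2} (Y_1*)^{k_1}⋯(Y_n*)^{k_n} ξ, with the convention |k⟩_ξ := 0 if some component of k∈ℤⁿ is negative. Then for all k∈ℕⁿ: Y_i*|k⟩_ξ = q^{k_1+…+k_{i-1}}√(1−q^{2k_i+2}) |k+𝐞_i⟩_ξ for 1≤i<n; Y_n*|k⟩_ξ = q^{k_1+…+k_{n-1}}√(1−q^{4k_n+4}) |k+𝐞_n⟩_ξ; and Y_{n+1}|k⟩_ξ = q^{|k|+k_n} |k⟩_{Y_{n+1}ξ}. -/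

import Mathlib

open ContinuousLinearMap

noncomputable section

abbrev lpH (n : ℕ) : Type := lp (fun _ : Fin n → ℕ => ℂ) 2

def basisE {n : ℕ} (k : Fin n → ℕ) : lpH n := lp.single 2 k 1

/-- A `Σ_q`-family: relations (R1)-(R5). Index `i : Fin (n+1)` corresponds to `Y_{i+1}`. -/
def IsSigmaQFamily (q : ℝ) {n : ℕ} {H : Type*} [NormedAddCommGroup H]
    [InnerProductSpace ℂ H] [CompleteSpace H]
    (Y : Fin (n + 1) → H →L[ℂ] H) : Prop :=
  (∀ i j : Fin (n + 1), j < i → ¬((i : ℕ) = n ∧ (j : ℕ) + 1 = n) →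
      Y i * Y j = ((q : ℂ))⁻¹ • (Y j * Y i) ∧
      adjoint (Y i) * Y j = ((q : ℂ))⁻¹ • (Y j * adjoint (Y i))) ∧
  (∀ j : Fin (n + 1), (j : ℕ) + 1 = n →
      Y (Fin.last n) * Y j = (((q : ℂ))⁻¹ ^ 2) • (Y j * Y (Fin.last n)) ∧
      adjoint (Y (Fin.last n)) * Y j = (((q : ℂ))⁻¹ ^ 2) • (Y j * adjoint (Y (Fin.last n)))) ∧
  (∀ i : Fin (n + 1), (i : ℕ) + 1 ≠ n →
      Y i * adjoint (Y i) - adjoint (Y i) * Y i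
        = ((1 - q ^ 2 : ℝ) : ℂ) • ∑ k ∈ Finset.Ioi i, adjoint (Y k) * Y k) ∧
  (∀ i : Fin (n + 1), (i : ℕ) + 1 = n →
      Y i * adjoint (Y i) - adjoint (Y i) * Y i
        = ((1 - q ^ 4 : ℝ) : ℂ) • (adjoint (Y (Fin.last n)) * Y (Fin.last n))) ∧
  (∑ i, adjoint (Y i) * Y i = 1)

/-- The representation `π_λ` on `ℓ²(ℕⁿ)`, described by its action on the canonical
orthonormal basis. Index `i : Fin n` (via `castSucc`) corresponds to `Y_{i+1}`,
and `Fin.last n` corresponds to `Y_{n+1}`. -/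
def IsPiRep (q : ℝ) {n : ℕ} (lam : ℂ) (Y : Fin (n + 1) → lpH n →L[ℂ] lpH n) : Prop :=
  (∀ i : Fin n, (i : ℕ) + 1 < n → ∀ k : Fin n → ℕ,
      Y i.castSucc (basisE k)
        = ((q ^ (∑ j ∈ Finset.Iio i, k j) * Real.sqrt (1 - q ^ (2 * k i)) : ℝ) : ℂ)
            • basisE (Function.update k i (k i - 1))) ∧
  (∀ i : Fin n, (i : ℕ) + 1 = n → ∀ k : Fin n → ℕ,
      Y i.castSucc (basisE k)
        = ((q ^ (∑ j ∈ Finset.Iio i, k j) * Real.sqrt (1 - q ^ (4 * k i)) : ℝ) : ℂ)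
            • basisE (Function.update k i (k i - 1))) ∧
  (∀ k : Fin n → ℕ,
      Y (Fin.last n) (basisE k)
        = (lam * (q : ℂ) ^ (∑ j : Fin n, if (j : ℕ) + 1 = n then 2 * k j else k j))
            • basisE k)

/-- Irreducibility: the only closed invariant subspaces are `⊥` and `⊤`. -/
def IsIrreducibleFamily {n : ℕ} {H : Type*} [NormedAddCommGroup H]
    [InnerProductSpace ℂ H] [CompleteSpace H]
    (Y : Fin (n + 1) → H →L[ℂ] H) : Prop :=
  ∀ V : Submodule ℂ H, IsClosed (V : Set H) →
    (∀ i : Fin (n + 1), ∀ v ∈ V, Y i v ∈ V ∧ adjoint (Y i) v ∈ V) →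
    V = ⊥ ∨ V = ⊤
/-- The q-shifted factorial `(a;b)_ℓ = ∏_{i=0}^{ℓ-1} (1 - a bⁱ)`. -/
def qPoch (a b : ℝ) (l : ℕ) : ℝ := ∏ i ∈ Finset.range l, (1 - a * b ^ i)

/-- The vector `|k⟩_ξ`. -/
def ket (q : ℝ) {n : ℕ} {H : Type*} [NormedAddCommGroup H]
    [InnerProductSpace ℂ H] [CompleteSpace H]
    (Y : Fin (n + 1) → H →L[ℂ] H) (ξ : H) (k : Fin n → ℕ) : H :=
  (((Real.sqrt (∏ i : Fin n,
      if (i : ℕ) + 1 = n then qPoch (q ^ 4) (q ^ 4) (k i) else qPoch (q ^ 2) (q ^ 2) (k i)))⁻¹ : ℝ) : ℂ) •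
    (List.ofFn fun i : Fin n => (adjoint (Y i.castSucc)) ^ (k i)).prod ξ





section MoveLemmas

variable {M : Type*} [Ring M] [Algebra ℂ M]

lemma comm_pow' (A B : M) (c : ℂ) (h : A * B = c • (B * A)) (m : ℕ) :
    A * B ^ m = c ^ m • (B ^ m * A) := by
  induction m with
  | zero => simp
  | succ m ih =>
    have h1 : A * B ^ (m + 1) = c ^ m • (B ^ m * (c • (B * A))) := by
      rw [pow_succ, ← mul_assoc, ih, smul_mul_assoc, mul_assoc, h]
    rw [h1, mul_smul_comm, smul_smul, ← pow_succ, pow_succ B, mul_assoc]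

lemma move_all : ∀ {n : ℕ} (A : M) (g : Fin n → M) (c : Fin n → ℂ),
    (∀ j, A * g j = c j • (g j * A)) →
    A * (List.ofFn g).prod = (∏ j, c j) • ((List.ofFn g).prod * A) := by
  intro n
  induction n with
  | zero => intro A g c h; simp
  | succ n ih =>
    intro A g c h
    rw [List.ofFn_succ, List.prod_cons, ← mul_assoc, h 0, smul_mul_assoc, mul_assoc,
      ih A (fun i => g i.succ) (fun i => c i.succ) (fun i => h i.succ),
      Fin.prod_univ_succ, mul_smul_comm, smul_smul, mul_assoc]

lemma fin_sum_Iio_succ {n : ℕ} (k : Fin (n + 1) → ℕ) (i : Fin n) :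
    ∑ j ∈ Finset.Iio i.succ, k j = k 0 + ∑ j ∈ Finset.Iio i, k j.succ := by
  have : (Finset.Iio i.succ : Finset (Fin (n + 1)))
      = insert 0 ((Finset.Iio i).map ⟨Fin.succ, Fin.succ_injective n⟩) := by
    ext j
    simp only [Finset.mem_Iio, Finset.mem_insert, Finset.mem_map,
      Function.Embedding.coeFn_mk]
    cases j using Fin.cases with
    | zero => simp [Fin.succ_pos]
    | succ j =>
      simp only [Fin.succ_lt_succ_iff]
      constructor
      · intro hj; exact Or.inr ⟨j, hj, rfl⟩
      · rintro (hj | ⟨j', hj', hj'eq⟩)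
        · exact absurd hj (Fin.succ_ne_zero j)
        · rw [← Fin.succ_injective n hj'eq]; exact hj'
  rw [this, Finset.sum_insert (by simp [Fin.succ_ne_zero]), Finset.sum_map]
  rfl

lemma update_comp_succ {n : ℕ} (k : Fin (n + 1) → ℕ) (i : Fin n) (v : ℕ) :
    (fun j : Fin n => Function.update k i.succ v j.succ)
      = Function.update (fun j : Fin n => k j.succ) i v := by
  funext j
  by_cases hji : j = i
  · subst hji; simp
  · rw [Function.update_of_ne hji,
      Function.update_of_ne (fun hc => hji (Fin.succ_injective n hc))]

lemma move_partial : ∀ {n : ℕ} (A : Fin n → M) (q' : ℂ),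
    (∀ j l : Fin n, j < l → A l * A j = q' • (A j * A l)) →
    ∀ (k : Fin n → ℕ) (i : Fin n),
    A i * (List.ofFn fun j => A j ^ k j).prod
      = q' ^ (∑ j ∈ Finset.Iio i, k j) •
        (List.ofFn fun j => A j ^ (Function.update k i (k i + 1) j)).prod := by
  intro n
  induction n with
  | zero => intro A q' h k i; exact absurd i.isLt (by omega)
  | succ n ih =>
    intro A q' h k i
    rw [List.ofFn_succ, List.prod_cons, List.ofFn_succ, List.prod_cons]
    cases i using Fin.cases with
    | zero =>
      have hsum : ∑ j ∈ Finset.Iio (0 : Fin (n+1)), k j = 0 :=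
        Finset.sum_eq_zero fun j hj => absurd (Finset.mem_Iio.mp hj) (Fin.not_lt_zero j)
      have hl : (List.ofFn fun j : Fin n => A j.succ ^ Function.update k 0 (k 0 + 1) j.succ)
          = List.ofFn fun j : Fin n => A j.succ ^ k j.succ :=
        congrArg List.ofFn (funext fun j => by
          rw [Function.update_of_ne (Fin.succ_ne_zero j)])
      rw [hl, hsum, pow_zero, one_smul, ← mul_assoc, ← pow_succ', Function.update_self]
    | succ i =>
      have h0 : A i.succ * A 0 = q' • (A 0 * A i.succ) := h 0 i.succ (Fin.succ_pos i)
      have hl : (List.ofFn fun j : Fin n =>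
            A j.succ ^ Function.update k i.succ (k i.succ + 1) j.succ)
          = List.ofFn fun j : Fin n =>
            A j.succ ^ Function.update (fun j : Fin n => k j.succ) i (k i.succ + 1) j :=
        congrArg List.ofFn (funext fun j => by
          rw [congrFun (update_comp_succ k i (k i.succ + 1)) j])
      rw [hl, Function.update_of_ne (Fin.succ_ne_zero i).symm, ← mul_assoc,
        comm_pow' _ _ _ h0, smul_mul_assoc, mul_assoc,
        ih (fun j => A j.succ) q'
          (fun j l hjl => h j.succ l.succ (Fin.succ_lt_succ_iff.mpr hjl))
          (fun j => k j.succ) i,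
        mul_smul_comm, smul_smul, fin_sum_Iio_succ k i, pow_add]

end MoveLemmas

section QPochFacts

lemma qPochPos (a b : ℝ) (ha0 : 0 ≤ a) (ha1 : a < 1) (hb0 : 0 ≤ b) (hb1 : b ≤ 1)
    (l : ℕ) : 0 < ∏ i ∈ Finset.range l, (1 - a * b ^ i) := by
  apply Finset.prod_pos
  intro i _
  have hb : b ^ i ≤ 1 := pow_le_one₀ hb0 hb1
  nlinarith

end QPochFacts

section StarHelpers

variable {M : Type*} [Ring M] [StarRing M] [Algebra ℂ M] [StarModule ℂ M]

lemma star_comm_of {A B : M} {c : ℂ} (h : A * B = c • (B * A)) :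
    star B * star A = (starRingEnd ℂ) c • (star A * star B) := by
  calc star B * star A = star (A * B) := (star_mul A B).symm
    _ = star (c • (B * A)) := by rw [h]
    _ = (starRingEnd ℂ) c • (star A * star B) := by rw [star_smul, star_mul]; rfl

end StarHelpers

lemma eq_smul_of_inv {M : Type*} [AddCommGroup M] [Module ℂ M] {c : ℂ} (hc : c ≠ 0)
    {X Z : M} (h : X = c⁻¹ • Z) : Z = c • X := by rw [h, smul_inv_smul₀ hc]

/-- Equations (16) of the paper: action of `Y_i*` (`1 ≤ i < n`), of `Y_n*` and of
`Y_{n+1}` on the vectors `|k⟩_ξ`. -/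
theorem ket_relations (q : ℝ) (hq0 : 0 < q) (hq1 : q < 1) (n : ℕ) (hn : 1 ≤ n)
    {H : Type*} [NormedAddCommGroup H] [InnerProductSpace ℂ H] [CompleteSpace H]
    (Y : Fin (n + 1) → H →L[ℂ] H) (hY : IsSigmaQFamily q Y)
    (ξ : H) (hann : ∀ i : Fin n, Y i.castSucc ξ = 0) :
    (∀ i : Fin n, (i : ℕ) + 1 < n → ∀ k : Fin n → ℕ,
        adjoint (Y i.castSucc) (ket q Y ξ k)
          = ((q ^ (∑ j ∈ Finset.Iio i, k j) * Real.sqrt (1 - q ^ (2 * k i + 2)) : ℝ) : ℂ)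
              • ket q Y ξ (Function.update k i (k i + 1))) ∧
    (∀ i : Fin n, (i : ℕ) + 1 = n → ∀ k : Fin n → ℕ,
        adjoint (Y i.castSucc) (ket q Y ξ k)
          = ((q ^ (∑ j ∈ Finset.Iio i, k j) * Real.sqrt (1 - q ^ (4 * k i + 4)) : ℝ) : ℂ)
              • ket q Y ξ (Function.update k i (k i + 1))) ∧
    (∀ k : Fin n → ℕ,
        Y (Fin.last n) (ket q Y ξ k)
          = ((q ^ (∑ j : Fin n, if (j : ℕ) + 1 = n then 2 * k j else k j) : ℝ) : ℂ)
              • ket q Y (Y (Fin.last n) ξ) k) := by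
  obtain ⟨hR1, hR2, -, -, -⟩ := hY
  have hq0' : (q : ℂ) ≠ 0 := by exact_mod_cast hq0.ne'
  -- the commutation relations among the adjoints
  have hsw : ∀ j l : Fin n, j < l →
      adjoint (Y l.castSucc) * adjoint (Y j.castSucc)
        = (q : ℂ) • (adjoint (Y j.castSucc) * adjoint (Y l.castSucc)) := by
    intro j l hjl
    have h1 := (hR1 l.castSucc j.castSucc
      (by simpa [Fin.castSucc_lt_castSucc_iff] using hjl)
      (by rintro ⟨h1', -⟩; have := l.isLt; simp [Fin.coe_castSucc] at h1'; omega)).1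
    have h2 := star_comm_of h1
    rw [map_inv₀, Complex.conj_ofReal] at h2
    simp only [star_eq_adjoint] at h2
    exact eq_smul_of_inv hq0' h2
  -- moving `Y_{n+1}` past the adjoints
  have hlast : ∀ j : Fin n,
      Y (Fin.last n) * adjoint (Y j.castSucc)
        = (if (j : ℕ) + 1 = n then (q : ℂ) ^ 2 else (q : ℂ)) •
            (adjoint (Y j.castSucc) * Y (Fin.last n)) := by
    intro j
    by_cases hj : (j : ℕ) + 1 = n
    · rw [if_pos hj]
      have h1 := (hR2 j.castSucc (by simpa using hj)).2
      have h2 := star_comm_of h1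
      rw [map_pow, map_inv₀, Complex.conj_ofReal] at h2
      simp only [star_eq_adjoint, adjoint_adjoint] at h2
      rw [inv_pow] at h2
      exact eq_smul_of_inv (pow_ne_zero 2 hq0') h2
    · rw [if_neg hj]
      have h1 := (hR1 (Fin.last n) j.castSucc (Fin.castSucc_lt_last j)
        (fun hc => hj (by simpa using hc.2))).2
      have h2 := star_comm_of h1
      rw [map_inv₀, Complex.conj_ofReal] at h2
      simp only [star_eq_adjoint, adjoint_adjoint] at h2
      exact eq_smul_of_inv hq0' h2
  -- the normalisation constants
  set F : Fin n → ℕ → ℝ := fun j m =>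
    if (j : ℕ) + 1 = n then qPoch (q ^ 4) (q ^ 4) m else qPoch (q ^ 2) (q ^ 2) m with hF
  have hq2 : q ^ 2 < 1 := pow_lt_one₀ hq0.le hq1 (by norm_num)
  have hq4 : q ^ 4 < 1 := pow_lt_one₀ hq0.le hq1 (by norm_num)
  have hFpos : ∀ (j : Fin n) (m : ℕ), 0 < F j m := by
    intro j m
    rw [hF]
    dsimp only
    split
    · exact qPochPos _ _ (by positivity) hq4 (by positivity) hq4.le m
    · exact qPochPos _ _ (by positivity) hq2 (by positivity) hq2.le m
  have hcpos : ∀ k : Fin n → ℕ, (0:ℝ) < ∏ j, F j (k j) :=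
    fun k => Finset.prod_pos fun j _ => hFpos j (k j)
  have hFsucc : ∀ (i : Fin n) (m : ℕ),
      F i (m + 1) = F i m * (1 - q ^ (if (i : ℕ) + 1 = n then 4 * m + 4 else 2 * m + 2)) := by
    intro i m
    rw [hF]
    dsimp only
    split
    · rw [qPoch, qPoch, Finset.prod_range_succ]
      congr 2
      rw [← pow_mul, ← pow_add]
      congr 1
      omega
    · rw [qPoch, qPoch, Finset.prod_range_succ]
      congr 2
      rw [← pow_mul, ← pow_add]
      congr 1
      omega
  have hupdate : ∀ (i : Fin n) (k : Fin n → ℕ),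
      ∏ j, F j (Function.update k i (k i + 1) j)
        = (1 - q ^ (if (i : ℕ) + 1 = n then 4 * k i + 4 else 2 * k i + 2)) * ∏ j, F j (k j) := by
    intro i k
    have he : (fun j => F j (Function.update k i (k i + 1) j))
        = Function.update (fun j => F j (k j)) i (F i (k i + 1)) := by
      funext j
      by_cases hji : j = i
      · subst hji; simp
      · rw [Function.update_of_ne hji, Function.update_of_ne hji]
    rw [he, Finset.prod_update_of_mem (Finset.mem_univ i),
      Finset.prod_eq_mul_prod_sdiff_singleton_of_mem (Finset.mem_univ i) (fun j => F j (k j)),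
      hFsucc i (k i)]
    ring
  -- positivity of the "extra factor"
  have hfacpos : ∀ m : ℕ, (0:ℝ) < 1 - q ^ m → True := fun _ _ => trivial
  -- the common scalar computation
  have hscal : ∀ (i : Fin n) (k : Fin n → ℕ) (e : ℕ),
      e = (if (i : ℕ) + 1 = n then 4 * k i + 4 else 2 * k i + 2) →
      (Real.sqrt (∏ j, F j (k j)))⁻¹
        = Real.sqrt (1 - q ^ e) *
          (Real.sqrt (∏ j, F j (Function.update k i (k i + 1) j)))⁻¹ := by
    intro i k e he
    have he' : e ≠ 0 := by rw [he]; split <;> omega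
    have hfac : (0:ℝ) < 1 - q ^ e := by
      have : q ^ e < 1 := pow_lt_one₀ hq0.le hq1 he'
      linarith
    rw [hupdate i k, ← he, Real.sqrt_mul hfac.le, mul_inv, ← mul_assoc,
      mul_inv_cancel₀ (Real.sqrt_ne_zero'.mpr hfac), one_mul]
  refine ⟨?_, ?_, ?_⟩
  · -- part 1
    intro i hi k
    have hie : ¬((i : ℕ) + 1 = n) := by omega
    simp only [ket]
    rw [map_smul, ← ContinuousLinearMap.mul_apply,
      move_partial (fun j => adjoint (Y j.castSucc)) (q : ℂ) hsw k i,
      ContinuousLinearMap.smul_apply, smul_smul, smul_smul]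
    congr 1
    have hs := hscal i k (2 * k i + 2) (by rw [if_neg hie])
    simp only [hF] at hs
    push_cast [hs]
    ring
  · -- part 2
    intro i hi k
    simp only [ket]
    rw [map_smul, ← ContinuousLinearMap.mul_apply,
      move_partial (fun j => adjoint (Y j.castSucc)) (q : ℂ) hsw k i,
      ContinuousLinearMap.smul_apply, smul_smul, smul_smul]
    congr 1
    have hs := hscal i k (4 * k i + 4) (by rw [if_pos hi])
    simp only [hF] at hs
    push_cast [hs]
    ring
  · -- part 3
    intro k
    simp only [ket]
    rw [map_smul, ← ContinuousLinearMap.mul_apply,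
      move_all (Y (Fin.last n)) (fun j => adjoint (Y j.castSucc) ^ k j)
        (fun j : Fin n => (if (j : ℕ) + 1 = n then (q : ℂ) ^ 2 else (q : ℂ)) ^ k j)
        (fun j => comm_pow' _ _ _ (hlast j) (k j)),
      ContinuousLinearMap.smul_apply, ContinuousLinearMap.mul_apply,
      smul_smul, smul_smul]
    congr 1
    have hprod : ∀ j ∈ (Finset.univ : Finset (Fin n)),
        (if (j : ℕ) + 1 = n then (q : ℂ) ^ 2 else (q : ℂ)) ^ k j
          = (q : ℂ) ^ (if (j : ℕ) + 1 = n then 2 * k j else k j) := by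
      intro j _
      split
      · rw [← pow_mul]
      · rfl
    rw [Finset.prod_congr rfl hprod, Finset.prod_pow_eq_pow_sum]
    push_cast
    ring
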